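/- arXiv:2511.15326 — 4 statements merged into one kernel-verified Lean document; each statement's English description precedes it below -/
import Mathlib

section
/- Let F(x) = x - x^2 for x in [0,1], let m be a positive integer, and let I_m : [0,1] -> [0,1] be the piecewise linear interpolant of F at the points k/2^m, k in {0,...,2^m}, i.e., I_m(k/2^m) = F(k/2^m) for all k in {0,...,2^m} and I_m is affine on each interval [k/2^m,(k+1)/2^m] for k in {0,...,2^m-1}. Then sup_{x in [0,1]} |F(x) - I_m(x)| = 2^{-2m-2}. Moreover, defining s_l(y) = (1/2)*max(0,y) - max(0, y - 2^{-2l-1}) for l in N_0, and recursively H_0 = s_0, H_l = s_l ∘ H_{l-1} for l >= 1, it holds that I_m(x) = sum_{l=0}^{m-1} H_l(x) for all x in [0,1]. -/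
/-- `s_ℓ(y) = (1/2)·max(0,y) − max(0, y − 2^{−2ℓ−1})`. -/
noncomputable def sFun (l : ℕ) (y : ℝ) : ℝ :=
  2⁻¹ * max 0 y - max 0 (y - (2 : ℝ) ^ (-(2 * (l : ℤ)) - 1))

/-- `H_0 = s_0`, `H_ℓ = s_ℓ ∘ H_{ℓ−1}`. -/
noncomputable def HFun : ℕ → ℝ → ℝ
  | 0 => sFun 0
  | l + 1 => sFun (l + 1) ∘ HFun l

noncomputable def gT (x : ℝ) : ℝ := 2 * x - 4 * max 0 (x - 2⁻¹)

lemma gT_mem {x : ℝ} (hx : x ∈ Set.Icc (0:ℝ) 1) : gT x ∈ Set.Icc (0:ℝ) 1 := by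
  obtain ⟨h0, h1⟩ := hx
  rcases le_total x 2⁻¹ with h | h
  · rw [gT, max_eq_left (by linarith)]; constructor <;> · simp; linarith
  · rw [gT, max_eq_right (by linarith)]; constructor <;> · simp; linarith

lemma gT_iter_mem (n : ℕ) {x : ℝ} (hx : x ∈ Set.Icc (0:ℝ) 1) :
    gT^[n] x ∈ Set.Icc (0:ℝ) 1 := by
  induction n with
  | zero => simpa using hx
  | succ n ih => rw [Function.iterate_succ_apply']; exact gT_mem ih

lemma sFun_pow (l : ℕ) : (2:ℝ) ^ (-(2*(l:ℤ))-1) = 2⁻¹ / 4^l := by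
  rw [show (-(2*(l:ℤ))-1) = -((2*l+1 : ℕ) : ℤ) by push_cast; ring, zpow_neg, zpow_natCast]
  rw [pow_succ', pow_mul]
  norm_num
  ring

lemma HFun_eq (l : ℕ) {x : ℝ} (hx : x ∈ Set.Icc (0:ℝ) 1) :
    HFun l x = gT^[l+1] x / 4 ^ (l+1) := by
  induction l with
  | zero =>
    have h0 : max 0 x = x := max_eq_right hx.1
    rw [show HFun 0 x = sFun 0 x from rfl, sFun, sFun_pow, Function.iterate_one, gT, h0]
    norm_num
    ring
  | succ n ih =>
    have hz := gT_iter_mem (n+1) hx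
    set z := gT^[n+1] x with hzdef
    have h4 : (0:ℝ) < 4 ^ (n+1) := by positivity
    rw [show HFun (n+1) x = sFun (n+1) (HFun n x) from rfl, ih,
      Function.iterate_succ_apply']
    rw [sFun, sFun_pow]
    have hmax1 : max 0 (z / 4^(n+1)) = z / 4^(n+1) :=
      max_eq_right (div_nonneg hz.1 h4.le)
    rw [hmax1]
    rcases le_total z 2⁻¹ with h | h
    · rw [max_eq_left (by
        have : z / 4^(n+1) ≤ 2⁻¹ / 4^(n+1) := by gcongr
        linarith), gT, max_eq_left (by linarith)]
      field_simp
      rw [hzdef, Function.iterate_succ_apply]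
      ring
    · rw [max_eq_right (by
        have : 2⁻¹ / 4^(n+1) ≤ z / 4^(n+1) := by gcongr
        linarith), gT, max_eq_right (by linarith)]
      field_simp
      rw [hzdef, Function.iterate_succ_apply]
      ring

lemma Fstep {x : ℝ} (hx : x ∈ Set.Icc (0:ℝ) 1) :
    x - x^2 = gT x / 4 + (gT x - (gT x)^2) / 4 := by
  rcases le_total x 2⁻¹ with h | h
  · rw [gT, max_eq_left (by linarith)]; ring
  · rw [gT, max_eq_right (by linarith)]; ring

lemma sum_HFun (m : ℕ) {x : ℝ} (hx : x ∈ Set.Icc (0:ℝ) 1) :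
    ∑ l ∈ Finset.range m, HFun l x
      = (x - x^2) - (gT^[m] x - (gT^[m] x)^2) / 4^m := by
  induction m with
  | zero => simp
  | succ n ih =>
    rw [Finset.sum_range_succ, ih, HFun_eq n hx, Function.iterate_succ_apply',
      Fstep (gT_iter_mem n hx)]
    have h4 : (4:ℝ)^n ≠ 0 := by positivity
    field_simp
    ring

lemma iter_formula : ∀ m : ℕ, ∀ k : ℕ, ∀ x : ℝ, k < 2^m →
    (k:ℝ)/2^m ≤ x → x ≤ ((k:ℝ)+1)/2^m →
    gT^[m] x - (gT^[m] x)^2 = 4^m * (x - (k:ℝ)/2^m) * (((k:ℝ)+1)/2^m - x) := by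
  intro m
  induction m with
  | zero =>
    intro k x hk h1 h2
    interval_cases k
    simp
    ring
  | succ n ih =>
    intro k x hk h1 h2
    have h2n : (0:ℝ) < 2^n := by positivity
    have e : ((2:ℝ))^(n+1) = 2^n * 2 := pow_succ 2 n
    rw [e] at h1 h2
    have h1' : (k:ℝ) ≤ x * (2^n * 2) := (div_le_iff₀ (by positivity)).mp h1
    have h2' : x * (2^n * 2) ≤ (k:ℝ) + 1 := (le_div_iff₀ (by positivity)).mp h2
    rw [Function.iterate_succ_apply]
    by_cases hks : k + 1 ≤ 2^n
    · have hksR : ((k:ℝ)+1) ≤ 2^n := by exact_mod_cast hks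
      have hxhalf : x ≤ 2⁻¹ := by nlinarith
      have hg : gT x = 2 * x := by
        rw [gT, max_eq_left (by linarith)]; ring
      have hk' : k < 2^n := by omega
      have hb1 : (k:ℝ)/2^n ≤ 2*x := by
        rw [div_le_iff₀ h2n]; linarith
      have hb2 : 2*x ≤ ((k:ℝ)+1)/2^n := by
        rw [le_div_iff₀ h2n]; linarith
      rw [hg, ih k (2*x) hk' hb1 hb2]
      rw [e, show ((4:ℝ))^(n+1) = 4^n*4 from pow_succ 4 n]
      field_simp
      ring
    · have hkge : 2^n ≤ k := by omega
      have hkgeR : (2:ℝ)^n ≤ (k:ℝ) := by exact_mod_cast hkge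
      have hxhalf : 2⁻¹ ≤ x := by nlinarith
      have hg : gT x = 2 - 2*x := by
        rw [gT, max_eq_right (by linarith)]; ring
      set k' : ℕ := 2^(n+1) - (k+1) with hk'def
      have hsum : k' + (k+1) = 2^(n+1) := by omega
      have hsumR : (k':ℝ) + ((k:ℝ)+1) = 2^n * 2 := by
        have := congrArg (Nat.cast : ℕ → ℝ) hsum
        push_cast at this
        rw [e] at this
        linarith
      have hk' : k' < 2^n := by omega
      have hb1 : (k':ℝ)/2^n ≤ 2 - 2*x := by
        rw [div_le_iff₀ h2n]; nlinarith
      have hb2 : 2 - 2*x ≤ ((k':ℝ)+1)/2^n := by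
        rw [le_div_iff₀ h2n]; nlinarith
      rw [hg, ih k' (2 - 2*x) hk' hb1 hb2]
      rw [show (k':ℝ) = 2^n * 2 - (k:ℝ) - 1 from by linarith]
      rw [e, show ((4:ℝ))^(n+1) = 4^n*4 from pow_succ 4 n]
      field_simp
      ring

lemma interp_eq (m : ℕ) (I : ℝ → ℝ)
    (hinterp : ∀ k : ℕ, k ≤ 2 ^ m →
      I ((k : ℝ) / 2 ^ m) = (k : ℝ) / 2 ^ m - ((k : ℝ) / 2 ^ m) ^ 2)
    (haff : ∀ k : ℕ, k < 2 ^ m → ∃ a b : ℝ,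
      ∀ x ∈ Set.Icc ((k : ℝ) / 2 ^ m) (((k : ℝ) + 1) / 2 ^ m), I x = a * x + b)
    (k : ℕ) (hk : k < 2^m) (x : ℝ)
    (h1 : (k:ℝ)/2^m ≤ x) (h2 : x ≤ ((k:ℝ)+1)/2^m) :
    I x = x - x^2 + (x - (k:ℝ)/2^m) * (x - ((k:ℝ)+1)/2^m) := by
  obtain ⟨a, b, hab⟩ := haff k hk
  set p : ℝ := (k:ℝ)/2^m with hp
  set q : ℝ := ((k:ℝ)+1)/2^m with hq
  have h2m : (0:ℝ) < 2^m := by positivity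
  have hpq : p < q := by
    rw [hp, hq, div_lt_div_iff₀ h2m h2m]; nlinarith
  have hpI : I p = p - p^2 := hinterp k hk.le
  have hqI : I q = q - q^2 := by
    have := hinterp (k+1) (by omega)
    push_cast at this
    exact this
  have ep : a * p + b = p - p^2 := by
    rw [← hab p ⟨le_refl p, hpq.le⟩, hpI]
  have eq' : a * q + b = q - q^2 := by
    rw [← hab q ⟨hpq.le, le_refl q⟩, hqI]
  have key : a * (q - p) = (q - p) * (1 - p - q) := by
    linear_combination eq' - ep
  have ha : a = 1 - p - q :=
    mul_left_cancel₀ (sub_ne_zero.mpr hpq.ne') (by linarith [key])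
  have hb : b = p * q := by nlinarith [ep, ha]
  rw [hab x ⟨h1, h2⟩, ha, hb]
  ring

lemma find_k (m : ℕ) {x : ℝ} (hx : x ∈ Set.Icc (0:ℝ) 1) :
    ∃ k : ℕ, k < 2^m ∧ (k:ℝ)/2^m ≤ x ∧ x ≤ ((k:ℝ)+1)/2^m := by
  have h2m : (0:ℝ) < 2^m := by positivity
  obtain ⟨h0, h1⟩ := hx
  by_cases hfl : ⌊(2:ℝ)^m * x⌋₊ < 2^m
  · refine ⟨⌊(2:ℝ)^m * x⌋₊, hfl, ?_, ?_⟩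
    · rw [div_le_iff₀ h2m]
      have := Nat.floor_le (by positivity : (0:ℝ) ≤ 2^m * x)
      linarith
    · rw [le_div_iff₀ h2m]
      have := Nat.lt_floor_add_one ((2:ℝ)^m * x)
      linarith
  · refine ⟨2^m - 1, Nat.sub_lt (Nat.two_pow_pos m) one_pos, ?_, ?_⟩
    · push_cast [Nat.cast_sub (Nat.one_le_two_pow)]
      rw [div_le_iff₀ h2m]
      push_neg at hfl
      have : ((2:ℕ)^m : ℝ) ≤ ⌊(2:ℝ)^m * x⌋₊ := by exact_mod_cast hfl
      have hle := Nat.floor_le (by positivity : (0:ℝ) ≤ 2^m * x)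
      push_cast at this
      nlinarith
    · push_cast [Nat.cast_sub (Nat.one_le_two_pow)]
      rw [le_div_iff₀ h2m]
      nlinarith

/-- Lemma (interpolation of `F(x) = x − x²` at dyadic points): if `I : [0,1] → [0,1]`
agrees with `F` at the points `k/2^m`, `k ∈ {0,…,2^m}`, and is affine on each interval
`[k/2^m, (k+1)/2^m]`, then `sup_{x∈[0,1]} |F(x) − I(x)| = 2^{−2m−2}` and
`I(x) = ∑_{ℓ=0}^{m−1} H_ℓ(x)` on `[0,1]`. -/
theorem stmt0 (m : ℕ) (hm : 1 ≤ m) (I : ℝ → ℝ)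
    (hmap : Set.MapsTo I (Set.Icc (0 : ℝ) 1) (Set.Icc (0 : ℝ) 1))
    (hinterp : ∀ k : ℕ, k ≤ 2 ^ m →
      I ((k : ℝ) / 2 ^ m) = (k : ℝ) / 2 ^ m - ((k : ℝ) / 2 ^ m) ^ 2)
    (haff : ∀ k : ℕ, k < 2 ^ m → ∃ a b : ℝ,
      ∀ x ∈ Set.Icc ((k : ℝ) / 2 ^ m) (((k : ℝ) + 1) / 2 ^ m), I x = a * x + b) :
    sSup ((fun x : ℝ => |(x - x ^ 2) - I x|) '' Set.Icc (0 : ℝ) 1)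
        = (2 : ℝ) ^ (-(2 * (m : ℤ)) - 2) ∧
      ∀ x ∈ Set.Icc (0 : ℝ) 1, I x = ∑ l ∈ Finset.range m, HFun l x := by
  have h2m : (0:ℝ) < 2^m := by positivity
  have h4m : (0:ℝ) < 4^m := by positivity
  have h24 : (4:ℝ)^m = 2^m * 2^m := by
    rw [show (4:ℝ) = 2*2 by norm_num, mul_pow]
  have hM : (2:ℝ) ^ (-(2*(m:ℤ))-2) = 1 / (4^m * 4) := by
    rw [show -(2*(m:ℤ))-2 = -((2*m+2 : ℕ):ℤ) by push_cast; ring, zpow_neg, zpow_natCast,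
      pow_add, pow_mul]
    norm_num
  -- pointwise description of I
  have keyI : ∀ x ∈ Set.Icc (0:ℝ) 1, ∃ k : ℕ, k < 2^m ∧ (k:ℝ)/2^m ≤ x ∧ x ≤ ((k:ℝ)+1)/2^m ∧
      I x = x - x^2 + (x - (k:ℝ)/2^m)*(x - ((k:ℝ)+1)/2^m) := by
    intro x hx
    obtain ⟨k, hk, hb1, hb2⟩ := find_k m hx
    exact ⟨k, hk, hb1, hb2, interp_eq m I hinterp haff k hk x hb1 hb2⟩
  -- upper bound
  have hub : ∀ y ∈ (fun x : ℝ => |(x - x ^ 2) - I x|) '' Set.Icc (0 : ℝ) 1,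
      y ≤ (2:ℝ) ^ (-(2*(m:ℤ))-2) := by
    rintro y ⟨x, hx, rfl⟩
    obtain ⟨k, hk, hb1, hb2, hIx⟩ := keyI x hx
    rw [hM]
    show |(x - x^2) - I x| ≤ 1/(4^m*4)
    rw [hIx, show (x - x^2) - (x - x^2 + (x - (k:ℝ)/2^m)*(x - ((k:ℝ)+1)/2^m))
        = (x - (k:ℝ)/2^m)*(((k:ℝ)+1)/2^m - x) from by ring,
      abs_of_nonneg (mul_nonneg (by linarith) (by linarith)),
      le_div_iff₀ (by positivity)]
    have hqp2 : (((k:ℝ)+1)/2^m - (k:ℝ)/2^m) * 2^m = 1 := by field_simp; ring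
    have h1sq : ((((k:ℝ)+1)/2^m - (k:ℝ)/2^m) * 2^m)^2 = 1 := by rw [hqp2]; norm_num
    rw [h24]
    nlinarith [sq_nonneg ((x - (k:ℝ)/2^m - (((k:ℝ)+1)/2^m - x)) * 2^m), h1sq]
  constructor
  · -- the supremum
    set x₀ : ℝ := 1/(2^m*2) with hx₀
    have h1le : (1:ℝ) ≤ 2^m := one_le_pow₀ (by norm_num)
    have hx₀mem : x₀ ∈ Set.Icc (0:ℝ) 1 := by
      constructor
      · positivity
      · rw [hx₀, div_le_one (by positivity)]; linarith
    have hb1 : ((0:ℕ):ℝ)/2^m ≤ x₀ := by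
      simp only [Nat.cast_zero, zero_div]; positivity
    have hb2 : x₀ ≤ (((0:ℕ):ℝ)+1)/2^m := by
      simp only [Nat.cast_zero, zero_add]
      rw [hx₀, div_le_div_iff₀ (by positivity) h2m]
      nlinarith
    have hIx0 := interp_eq m I hinterp haff 0 (Nat.two_pow_pos m) x₀ hb1 hb2
    simp only [Nat.cast_zero, zero_div, zero_add] at hIx0
    have hx₀le : x₀ ≤ 1/2^m := by
      rw [hx₀, div_le_div_iff₀ (by positivity) h2m]; nlinarith
    have hval : |(x₀ - x₀^2) - I x₀| = 1/(4^m*4) := by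
      rw [hIx0, show (x₀ - x₀^2) - (x₀ - x₀^2 + (x₀ - 0)*(x₀ - 1/2^m))
          = x₀*(1/2^m - x₀) from by ring,
        abs_of_nonneg (mul_nonneg (by positivity) (by linarith)), hx₀, h24]
      field_simp
      ring
    apply le_antisymm
    · exact csSup_le ((Set.nonempty_Icc.mpr (by norm_num)).image _) hub
    · refine le_csSup ⟨_, hub⟩ ⟨x₀, hx₀mem, ?_⟩
      show |(x₀ - x₀^2) - I x₀| = _
      rw [hval, hM]
  · intro x hx
    obtain ⟨k, hk, hb1, hb2, hIx⟩ := keyI x hx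
    rw [hIx, sum_HFun m hx, iter_formula m k x hk hb1 hb2]
    field_simp
    ring
end

section
/- Let l ∈ ℕ and define F_l = f_l ∘ ... ∘ f_1. Then for all x ∈ ℝ: F_l(x)_i = x^{2^{l-1} + i} for all i ∈ {1,...,2^{l-1}}, and F_l(x)_{2^{l-1}+1} = x. -/
/-- The map `f_ℓ : ℝ^{2^{ℓ−2}+1} → ℝ^{2^{ℓ−1}+1}` (for `ℓ ≥ 2`), written with 0-based
indices: with `x_1, …, x_{2^{ℓ−2}+1}` the (1-based) coordinates of the input,
`f_ℓ(x)_1 = x_{2^{ℓ−2}} x_{2^{ℓ−2}+1}`, `f_ℓ(x)_{2k} = x_k²` for `k ∈ {1,…,2^{ℓ−2}}`,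
`f_ℓ(x)_{2k+1} = x_k x_{k+1}` for `k ∈ {1,…,2^{ℓ−2}−1}`, and
`f_ℓ(x)_{2^{ℓ−1}+1} = x_{2^{ℓ−2}+1}`.  (Out-of-range accesses, which do not occur for
`ℓ ≥ 2`, default to `0`.) -/
noncomputable def fPoly (l : ℕ) (x : Fin (2 ^ (l - 2) + 1) → ℝ)
    (i : Fin (2 ^ (l - 1) + 1)) : ℝ :=
  let x' : ℕ → ℝ := fun j => if h : j < 2 ^ (l - 2) + 1 then x ⟨j, h⟩ else 0
  if (i : ℕ) = 0 then x' (2 ^ (l - 2) - 1) * x' (2 ^ (l - 2))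
  else if (i : ℕ) = 2 ^ (l - 1) then x' (2 ^ (l - 2))
  else if (i : ℕ) % 2 = 1 then (x' (((i : ℕ) + 1) / 2 - 1)) ^ 2
  else x' ((i : ℕ) / 2 - 1) * x' ((i : ℕ) / 2)

/-- The map `f_1 : ℝ → ℝ²`, `f_1(x) = (x², x)`. -/
noncomputable def f1 (x : ℝ) : Fin 2 → ℝ := ![x ^ 2, x]

/-- `F_ℓ = f_ℓ ∘ ⋯ ∘ f_1 : ℝ → ℝ^{2^{ℓ−1}+1}` (for `ℓ ≥ 1`; the value at `ℓ = 0` is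
irrelevant junk). -/
noncomputable def FPoly : (l : ℕ) → ℝ → Fin (2 ^ (l - 1) + 1) → ℝ
  | 0 => fun x _ => x
  | 1 => f1
  | l + 2 => fun x => fPoly (l + 2) (FPoly (l + 1) x)

/-- Lemma: for `ℓ ≥ 1` and all `x ∈ ℝ`, `F_ℓ(x)_i = x^{2^{ℓ−1}+i}` for
`i ∈ {1,…,2^{ℓ−1}}` (here `i.castSucc` is the 0-based version of the 1-based index
`i+1`), and `F_ℓ(x)_{2^{ℓ−1}+1} = x`. -/
theorem stmt11 (l : ℕ) (hl : 1 ≤ l) (x : ℝ) :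
    (∀ i : Fin (2 ^ (l - 1)), FPoly l x i.castSucc = x ^ (2 ^ (l - 1) + (i : ℕ) + 1)) ∧
    FPoly l x (Fin.last (2 ^ (l - 1))) = x := by
  induction l, hl using Nat.le_induction with
  | base =>
    constructor
    · intro i
      fin_cases i
      simp [FPoly, f1]
    · rfl
  | succ l hl IH =>
    obtain ⟨m, rfl⟩ : ∃ m, l = m + 1 := ⟨l - 1, by omega⟩
    have hn : 0 < 2 ^ m := Nat.pow_pos (by norm_num)
    have hnn : 2 ^ (m + 1) = 2 ^ m + 2 ^ m := by rw [pow_succ]; omega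
    have hy : ∀ j (h : j < 2 ^ m + 1),
        FPoly (m + 1) x ⟨j, h⟩ = if j < 2 ^ m then x ^ (2 ^ m + j + 1) else x := by
      intro j h
      by_cases hj : j < 2 ^ m
      · rw [if_pos hj]
        have := IH.1 ⟨j, hj⟩
        simpa using this
      · rw [if_neg hj]
        have hj' : j = 2 ^ m := by omega
        subst hj'
        exact IH.2
    have key : ∀ (j : Fin (2 ^ (m + 1) + 1)), (j : ℕ) < 2 ^ (m + 1) →
        FPoly (m + 2) x j = x ^ (2 ^ (m + 1) + (j : ℕ) + 1) := by
      intro j hj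
      show fPoly (m + 2) (FPoly (m + 1) x) j = _
      rw [fPoly]
      simp only [show m + 2 - 2 = m from rfl, show m + 2 - 1 = m + 1 from rfl]
      by_cases h0 : (j : ℕ) = 0
      · rw [if_pos h0, dif_pos (show 2 ^ m - 1 < 2 ^ m + 1 by omega),
          dif_pos (show 2 ^ m < 2 ^ m + 1 by omega), hy, hy,
          if_pos (show 2 ^ m - 1 < 2 ^ m by omega), if_neg (lt_irrefl _),
          h0, ← pow_succ]
        congr 1
        omega
      · rw [if_neg h0, if_neg (by omega)]
        by_cases hpar : (j : ℕ) % 2 = 1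
        · rw [if_pos hpar]
          have hk : ((j : ℕ) + 1) / 2 - 1 < 2 ^ m := by omega
          rw [dif_pos (show ((j : ℕ) + 1) / 2 - 1 < 2 ^ m + 1 by omega), hy,
            if_pos hk, ← pow_mul]
          congr 1
          omega
        · rw [if_neg hpar]
          have hk1 : (j : ℕ) / 2 - 1 < 2 ^ m := by omega
          have hk2 : (j : ℕ) / 2 < 2 ^ m := by omega
          rw [dif_pos (show (j : ℕ) / 2 - 1 < 2 ^ m + 1 by omega),
            dif_pos (show (j : ℕ) / 2 < 2 ^ m + 1 by omega), hy, hy,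
            if_pos hk1, if_pos hk2, ← pow_add]
          congr 1
          omega
    constructor
    · intro i
      have := key i.castSucc i.isLt
      simpa using this
    · show fPoly (m + 2) (FPoly (m + 1) x) _ = x
      rw [fPoly]
      simp only [show m + 2 - 2 = m from rfl, show m + 2 - 1 = m + 1 from rfl,
        Fin.val_last]
      rw [if_neg (by omega), if_pos trivial]
      rw [ dif_pos (show 2 ^ m < 2 ^ m + 1 by omega),
        hy, if_neg (lt_irrefl _)]
end

section
/- Let l ∈ ℕ, D >= 1, and define F_l = f_l ∘ ... ∘ f_1. Then for all x ∈ [-D, D]: ‖F_l(x)‖_∞ <= D^{2^l}. -/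
lemma myAux (D : ℝ) (hD : 1 ≤ D) (x : ℝ) (hx : |x| ≤ D) :
    ∀ l : ℕ, ∀ i, |FPoly (l + 1) x i| ≤ D ^ (2 ^ (l + 1)) := by
  intro l
  induction l with
  | zero =>
    intro i
    have hx2 : |x| ^ 2 ≤ D ^ 2 := pow_le_pow_left₀ (abs_nonneg x) hx 2
    have hxD2 : |x| ≤ D ^ 2 := le_trans hx (by nlinarith)
    fin_cases i
    · simpa [FPoly, f1, abs_pow] using hx2
    · simpa [FPoly, f1] using hxD2
  | succ n ih =>
    intro i
    show |fPoly (n + 2) (FPoly (n + 1) x) i| ≤ _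
    set B : ℝ := D ^ (2 ^ (n + 1)) with hBdef
    have hB : 1 ≤ B := one_le_pow₀ hD
    have hB0 : 0 ≤ B := le_trans zero_le_one hB
    have hpow : D ^ (2 ^ (n + 2)) = B * B := by
      have h2 : 2 ^ (n + 2) = 2 ^ (n + 1) + 2 ^ (n + 1) := by ring
      rw [h2, pow_add]
    have key : ∀ a b : ℝ, |a| ≤ B → |b| ≤ B → |a * b| ≤ D ^ (2 ^ (n + 2)) := by
      intro a b ha hb
      rw [abs_mul, hpow]
      exact mul_le_mul ha hb (abs_nonneg _) hB0
    have key1 : ∀ a : ℝ, |a| ≤ B → |a| ≤ D ^ (2 ^ (n + 2)) := by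
      intro a ha
      calc |a| ≤ B := ha
        _ ≤ B * B := le_mul_of_one_le_left hB0 hB
        _ = _ := hpow.symm
    have key2 : ∀ a : ℝ, |a| ≤ B → |a ^ 2| ≤ D ^ (2 ^ (n + 2)) := by
      intro a ha
      rw [abs_pow, hpow, sq]
      exact mul_le_mul ha ha (abs_nonneg _) hB0
    have hz : |(0 : ℝ)| ≤ B := by simpa using hB0
    rw [fPoly]
    dsimp only
    split_ifs <;>
      first
        | exact key _ _ (ih _) (ih _)
        | exact key _ _ (ih _) hz
        | exact key _ _ hz (ih _)
        | exact key _ _ hz hz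
        | exact key1 _ (ih _)
        | exact key1 _ hz
        | exact key2 _ (ih _)
        | exact key2 _ hz

/-- Corollary: for `ℓ ≥ 1`, `D ≥ 1`, and all `x ∈ [−D, D]`, `‖F_ℓ(x)‖∞ ≤ D^{2^ℓ}`. -/
theorem stmt12 (l : ℕ) (hl : 1 ≤ l) (D : ℝ) (hD : 1 ≤ D)
    (x : ℝ) (hx : x ∈ Set.Icc (-D) D) :
    ‖FPoly l x‖ ≤ D ^ (2 ^ l) := by
  obtain ⟨m, rfl⟩ : ∃ m, l = m + 1 := ⟨l - 1, by omega⟩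
  have hD0 : (0:ℝ) ≤ D ^ 2 ^ (m + 1) := by positivity
  rw [pi_norm_le_iff_of_nonneg hD0]
  intro i
  rw [Real.norm_eq_abs]
  exact myAux D hD x (abs_le.2 ⟨hx.1, hx.2⟩) m i
end

section
/- Let D >= 1. For all x, y ∈ [-D, D]: ‖f_1(x)‖_∞ <= D² and ‖f_1(x) - f_1(y)‖_∞ <= 2D|x - y|. Moreover, for every l >= 2 and all x, y ∈ [-D^{2^{l-1}}, D^{2^{l-1}}]^{2^{l-2}+1}: ‖f_l(x)‖_∞ <= D^{2^l} and ‖f_l(x) - f_l(y)‖_∞ <= 2D^{2^{l-1}} ‖x - y‖_∞. -/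
lemma mulSub (M e : ℝ) (hM : 0 ≤ M) {a b c d : ℝ} (ha : |a| ≤ M) (hd : |d| ≤ M)
    (h1 : |a - c| ≤ e) (h2 : |b - d| ≤ e) : |a * b - c * d| ≤ 2 * M * e := by
  have key : a * b - c * d = a * (b - d) + d * (a - c) := by ring
  calc |a * b - c * d| = |a * (b - d) + d * (a - c)| := by rw [key]
    _ ≤ |a * (b - d)| + |d * (a - c)| := abs_add_le _ _
    _ = |a| * |b - d| + |d| * |a - c| := by rw [abs_mul, abs_mul]
    _ ≤ M * e + M * e := by
        have he : 0 ≤ e := le_trans (abs_nonneg _) h1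
        gcongr
    _ = 2 * M * e := by ring

/-- Lemma: for `D ≥ 1`: `‖f_1(x)‖∞ ≤ D²` and `‖f_1(x) − f_1(y)‖∞ ≤ 2D|x − y|` for all
`x, y ∈ [−D, D]`; and for every `ℓ ≥ 2` and all
`x, y ∈ [−D^{2^{ℓ−1}}, D^{2^{ℓ−1}}]^{2^{ℓ−2}+1}`: `‖f_ℓ(x)‖∞ ≤ D^{2^ℓ}` and
`‖f_ℓ(x) − f_ℓ(y)‖∞ ≤ 2 D^{2^{ℓ−1}} ‖x − y‖∞`. -/
theorem stmt13 (D : ℝ) (hD : 1 ≤ D) :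
    (∀ x ∈ Set.Icc (-D) D, ‖f1 x‖ ≤ D ^ 2) ∧
    (∀ x ∈ Set.Icc (-D) D, ∀ y ∈ Set.Icc (-D) D, ‖f1 x - f1 y‖ ≤ 2 * D * |x - y|) ∧
    (∀ l : ℕ, 2 ≤ l → ∀ x y : Fin (2 ^ (l - 2) + 1) → ℝ,
      (∀ i, x i ∈ Set.Icc (-(D ^ (2 ^ (l - 1)))) (D ^ (2 ^ (l - 1)))) →
      (∀ i, y i ∈ Set.Icc (-(D ^ (2 ^ (l - 1)))) (D ^ (2 ^ (l - 1)))) →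
      ‖fPoly l x‖ ≤ D ^ (2 ^ l) ∧
      ‖fPoly l x - fPoly l y‖ ≤ 2 * D ^ (2 ^ (l - 1)) * ‖x - y‖) := by
  have hD0 : (0 : ℝ) ≤ D := le_trans zero_le_one hD
  refine ⟨?_, ?_, ?_⟩
  · intro x hx
    have hxD : |x| ≤ D := abs_le.mpr ⟨hx.1, hx.2⟩
    rw [pi_norm_le_iff_of_nonneg (by positivity)]
    intro i
    fin_cases i <;> simp only [f1, Real.norm_eq_abs, Fin.isValue, Matrix.cons_val_zero,
      Matrix.cons_val_one, Matrix.head_cons, Fin.mk_one, Fin.mk_zero]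
    · rw [abs_pow]; gcongr
    · nlinarith [abs_nonneg x]
  · intro x hx y hy
    have hxD : |x| ≤ D := abs_le.mpr ⟨hx.1, hx.2⟩
    have hyD : |y| ≤ D := abs_le.mpr ⟨hy.1, hy.2⟩
    rw [pi_norm_le_iff_of_nonneg (by positivity)]
    intro i
    fin_cases i <;> simp only [Pi.sub_apply, f1, Real.norm_eq_abs, Fin.isValue,
      Matrix.cons_val_zero, Matrix.cons_val_one, Matrix.head_cons, Fin.mk_one, Fin.mk_zero]
    · rw [pow_two, pow_two]
      exact mulSub D |x - y| hD0 hxD hyD le_rfl le_rfl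
    · nlinarith [abs_nonneg (x - y)]
  · intro l hl x y hx hy
    set M : ℝ := D ^ (2 ^ (l - 1)) with hMdef
    have hM1 : (1 : ℝ) ≤ M := one_le_pow₀ hD
    have hM0 : (0 : ℝ) ≤ M := le_trans zero_le_one hM1
    have hl1 : l - 1 + 1 = l := by omega
    have hpow : D ^ (2 ^ l) = M ^ 2 := by
      rw [hMdef, ← pow_mul, ← pow_succ, hl1]
    let X : ℕ → ℝ := fun j => if h : j < 2 ^ (l - 2) + 1 then x ⟨j, h⟩ else 0
    let Y : ℕ → ℝ := fun j => if h : j < 2 ^ (l - 2) + 1 then y ⟨j, h⟩ else 0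
    have hX : ∀ j : ℕ, |X j| ≤ M := by
      intro j
      show |if h : j < 2 ^ (l - 2) + 1 then x ⟨j, h⟩ else 0| ≤ M
      split_ifs with h
      · exact abs_le.mpr ⟨(hx _).1, (hx _).2⟩
      · simpa using hM0
    have hY : ∀ j : ℕ, |Y j| ≤ M := by
      intro j
      show |if h : j < 2 ^ (l - 2) + 1 then y ⟨j, h⟩ else 0| ≤ M
      split_ifs with h
      · exact abs_le.mpr ⟨(hy _).1, (hy _).2⟩
      · simpa using hM0
    have hd : ∀ j : ℕ, |X j - Y j| ≤ ‖x - y‖ := by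
      intro j
      show |(if h : j < 2 ^ (l - 2) + 1 then x ⟨j, h⟩ else 0) -
        (if h : j < 2 ^ (l - 2) + 1 then y ⟨j, h⟩ else 0)| ≤ ‖x - y‖
      split_ifs with h
      · have := norm_le_pi_norm (x - y) ⟨j, h⟩
        simpa [Real.norm_eq_abs] using this
      · simpa using norm_nonneg (x - y)
    have he0 : (0 : ℝ) ≤ ‖x - y‖ := norm_nonneg _
    constructor
    · rw [hpow, pi_norm_le_iff_of_nonneg (by positivity)]
      intro i
      rw [Real.norm_eq_abs]
      show |if (i : ℕ) = 0 then X (2 ^ (l - 2) - 1) * X (2 ^ (l - 2))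
        else if (i : ℕ) = 2 ^ (l - 1) then X (2 ^ (l - 2))
        else if (i : ℕ) % 2 = 1 then (X (((i : ℕ) + 1) / 2 - 1)) ^ 2
        else X ((i : ℕ) / 2 - 1) * X ((i : ℕ) / 2)| ≤ M ^ 2
      split_ifs with h1 h2 h3
      · rw [abs_mul, pow_two]
        exact mul_le_mul (hX _) (hX _) (abs_nonneg _) hM0
      · exact le_trans (hX _) (by nlinarith)
      · rw [abs_pow]
        exact pow_le_pow_left₀ (abs_nonneg _) (hX _) 2
      · rw [abs_mul, pow_two]
        exact mul_le_mul (hX _) (hX _) (abs_nonneg _) hM0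
    · rw [pi_norm_le_iff_of_nonneg (by positivity)]
      intro i
      rw [Pi.sub_apply, Real.norm_eq_abs]
      show |(if (i : ℕ) = 0 then X (2 ^ (l - 2) - 1) * X (2 ^ (l - 2))
        else if (i : ℕ) = 2 ^ (l - 1) then X (2 ^ (l - 2))
        else if (i : ℕ) % 2 = 1 then (X (((i : ℕ) + 1) / 2 - 1)) ^ 2
        else X ((i : ℕ) / 2 - 1) * X ((i : ℕ) / 2)) -
        (if (i : ℕ) = 0 then Y (2 ^ (l - 2) - 1) * Y (2 ^ (l - 2))
        else if (i : ℕ) = 2 ^ (l - 1) then Y (2 ^ (l - 2))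
        else if (i : ℕ) % 2 = 1 then (Y (((i : ℕ) + 1) / 2 - 1)) ^ 2
        else Y ((i : ℕ) / 2 - 1) * Y ((i : ℕ) / 2))| ≤ 2 * M * ‖x - y‖
      split_ifs with h1 h2 h3
      · exact mulSub M ‖x - y‖ hM0 (hX _) (hY _) (hd _) (hd _)
      · exact le_trans (hd _) (by nlinarith)
      · rw [pow_two, pow_two]
        exact mulSub M ‖x - y‖ hM0 (hX _) (hY _) (hd _) (hd _)
      · exact mulSub M ‖x - y‖ hM0 (hX _) (hY _) (hd _) (hd _)
end
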